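/- Identity theorem in B^∞_{c,T}: let f ∈ B^∞_{c,T} with c ∈ ℝ, T > 0. If f(e^{kπ/T}, 0) = 0 for every k ∈ ℤ, then there exists a ∈ ℂ such that f(r,θ) = a · r^{−c} e^{−icθ} · sin(T(log r + iθ)) for all (r,θ) ∈ H. -/

import Mathlib

open MeasureTheory Filter Complex ENNReal

noncomputable section

/-- The right half-plane `H = {(r,θ) : r > 0}`. -/
def polarHalfPlane : Set (ℝ × ℝ) := {p : ℝ × ℝ | 0 < p.1}

/-- `f` has polar derivative `L` at `p`, the limit being taken within `D`. -/
def HasPolarDerivAt (f : ℝ × ℝ → ℂ) (D : Set (ℝ × ℝ)) (p : ℝ × ℝ) (L : ℂ) : Prop :=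
  Tendsto (fun q : ℝ × ℝ =>
      (f q - f p) /
        ((q.1 : ℂ) * Complex.exp (Complex.I * (q.2 : ℂ)) -
         (p.1 : ℂ) * Complex.exp (Complex.I * (p.2 : ℂ))))
    (nhdsWithin p (D \ {p})) (nhds L)

/-- `f` is polar-analytic on `D`. -/
def PolarAnalyticOn (f : ℝ × ℝ → ℂ) (D : Set (ℝ × ℝ)) : Prop :=
  ∀ p ∈ D, ∃ L : ℂ, HasPolarDerivAt f D p L

/-- The polar Mellin derivative `Θ_c f = r ∂f/∂r + c f`. -/
def mellinPolarDeriv (c : ℝ) (f : ℝ × ℝ → ℂ) : ℝ × ℝ → ℂ :=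
  fun p => (p.1 : ℂ) * deriv (fun r : ℝ => f (r, p.2)) p.1 + (c : ℂ) * f p

/-- The `X_c^p` norm. -/
def XNorm (c : ℝ) (p : ℝ≥0∞) (φ : ℝ → ℂ) : ℝ≥0∞ :=
  if p = ⊤ then ⨆ r : {r : ℝ // 0 < r}, ENNReal.ofReal ((r : ℝ) ^ c * ‖φ r‖)
  else (∫⁻ r in Set.Ioi (0 : ℝ),
          ENNReal.ofReal ((r ^ c * ‖φ r‖) ^ p.toReal / r)) ^ (1 / p.toReal)

/-- Membership in the Mellin–Bernstein space `B^p_{c,T}`. -/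
def MemMellinBernstein (p : ℝ≥0∞) (c T : ℝ) (f : ℝ × ℝ → ℂ) : Prop :=
  PolarAnalyticOn f polarHalfPlane ∧
  XNorm c p (fun r => f (r, 0)) < ⊤ ∧
  ∃ C : ℝ, 0 < C ∧ ∀ r θ : ℝ, 0 < r → r ^ c * ‖f (r, θ)‖ ≤ C * Real.exp (T * |θ|)

/-- The polar disk `E((r₀,θ₀),ρ)`. -/
def polarDisk (p : ℝ × ℝ) (ρ : ℝ) : Set (ℝ × ℝ) :=
  {q : ℝ × ℝ | 0 < q.1 ∧
    ‖((Real.log (q.1 / p.1) : ℂ) + Complex.I * ((q.2 - p.2 : ℝ) : ℂ))‖ < ρ}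

/-- The polar contour integral along the positively oriented boundary of
`[a,b] × [α,β]`:  `∮ g(r,θ) e^{iθ} (dr + i r dθ)`. -/
def rectPolarIntegral (a b α β : ℝ) (g : ℝ × ℝ → ℂ) : ℂ :=
  (∫ r in a..b, g (r, α) * Complex.exp (Complex.I * (α : ℂ))) +
  (∫ θ in α..β, g (b, θ) * Complex.I * (b : ℂ) * Complex.exp (Complex.I * (θ : ℂ))) -
  (∫ r in a..b, g (r, β) * Complex.exp (Complex.I * (β : ℂ))) -
  (∫ θ in α..β, g (a, θ) * Complex.I * (a : ℂ) * Complex.exp (Complex.I * (θ : ℂ)))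

/-- `(r₀,θ₀)` is a logarithmic pole of order `k` of `f`, witnessed by the
neighborhood `U₀` and the polar-analytic function `g`. -/
def IsLogPole (f : ℝ × ℝ → ℂ) (p : ℝ × ℝ) (k : ℕ) (U₀ : Set (ℝ × ℝ))
    (g : ℝ × ℝ → ℂ) : Prop :=
  IsOpen U₀ ∧ p ∈ U₀ ∧ U₀ ⊆ polarHalfPlane ∧ 1 ≤ k ∧
  PolarAnalyticOn f (U₀ \ {p}) ∧ PolarAnalyticOn g U₀ ∧ g p ≠ 0 ∧
  ∀ q ∈ U₀ \ {p},
    f q = g q / ((Real.log (q.1 / p.1) : ℂ) + Complex.I * ((q.2 - p.2 : ℝ) : ℂ)) ^ k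

/-- The `c`-residue of a logarithmic pole of order `k` with witness `g`. -/
def cResidue (c : ℝ) (p : ℝ × ℝ) (k : ℕ) (g : ℝ × ℝ → ℂ) : ℂ :=
  ((p.1 ^ c : ℝ) : ℂ) * Complex.exp (Complex.I * (c : ℂ) * (p.2 : ℂ)) *
    ((mellinPolarDeriv c)^[k - 1] g p) / ((k - 1).factorial : ℂ)

/-- The central Mellin difference `δ_{c,t} f`. -/
def centralMellinDiff (c t : ℝ) (f : ℝ × ℝ → ℂ) : ℝ × ℝ → ℂ :=
  fun q => ((t ^ c : ℝ) : ℂ) * f (t * q.1, q.2) - ((t ^ (-c) : ℝ) : ℂ) * f (t⁻¹ * q.1, q.2)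




-- Auxiliary lemmas

noncomputable def Complex.abs : AbsoluteValue ℂ ℝ := NormedField.toAbsoluteValue ℂ

lemma Complex.norm_eq_abs (z : ℂ) : ‖z‖ = Complex.abs z := rfl

@[simp] lemma Complex.abs_ofReal (x : ℝ) : Complex.abs (x : ℂ) = |x| := Complex.norm_real x

@[simp] lemma Complex.abs_I : Complex.abs Complex.I = 1 := Complex.norm_I

@[simp] lemma Complex.abs_two : Complex.abs 2 = 2 := Complex.norm_two

@[simp] lemma Complex.abs_exp (z : ℂ) : Complex.abs (Complex.exp z) = Real.exp z.re :=
  Complex.norm_exp z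

lemma Complex.sq_abs (z : ℂ) : Complex.abs z ^ 2 = Complex.normSq z := Complex.sq_norm z

lemma Complex.abs_intCast (n : ℤ) : Complex.abs (n : ℂ) = |(n : ℝ)| := Complex.norm_intCast n

lemma Complex.abs_im_le_abs (z : ℂ) : |z.im| ≤ Complex.abs z := Complex.abs_im_le_norm z

lemma Complex.abs_le_abs_re_add_abs_im (z : ℂ) : Complex.abs z ≤ |z.re| + |z.im| :=
  Complex.norm_le_abs_re_add_abs_im z

lemma my_aux_sin_sq (x y : ℝ) :
    Real.sin x ^ 2 + Real.sinh y ^ 2 = Complex.abs (Complex.sin ((x:ℂ) + (y:ℂ) * I)) ^ 2 := by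
  have h1 : Complex.sin ((x:ℂ) + (y:ℂ) * I) = (Real.sin x * Real.cosh y : ℝ) +
      (Real.cos x * Real.sinh y : ℝ) * I := by
    rw [Complex.sin_add_mul_I]
    simp [← Complex.ofReal_sin, ← Complex.ofReal_cos, ← Complex.ofReal_sinh,
      ← Complex.ofReal_cosh]
  rw [h1, Complex.sq_abs, Complex.normSq_add_mul_I]
  nlinarith [Real.sin_sq_add_cos_sq x, Real.cosh_sq y]

lemma my_norm_sin_sq (z : ℂ) :
    Real.sin z.re ^ 2 + Real.sinh z.im ^ 2 = Complex.abs (Complex.sin z) ^ 2 := by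
  have := my_aux_sin_sq z.re z.im
  rwa [Complex.re_add_im] at this

lemma my_sinh_le_norm_sin (z : ℂ) : Real.sinh |z.im| ≤ Complex.abs (Complex.sin z) := by
  have h := my_norm_sin_sq z
  have h2 : Real.sinh |z.im| ^ 2 = Real.sinh z.im ^ 2 := by
    rw [← Real.abs_sinh]; exact _root_.sq_abs _
  nlinarith [Complex.abs.nonneg (Complex.sin z), Real.sinh_nonneg_iff.2 (abs_nonneg z.im),
    sq_nonneg (Real.sin z.re)]

lemma my_abs_sin_re_le_norm_sin (z : ℂ) : |Real.sin z.re| ≤ Complex.abs (Complex.sin z) := by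
  have h := my_norm_sin_sq z
  nlinarith [Complex.abs.nonneg (Complex.sin z), abs_nonneg (Real.sin z.re),
    _root_.sq_abs (Real.sin z.re), sq_nonneg (Real.sinh z.im)]

lemma my_sin_lower : ∃ ρ : ℝ, 0 < ρ ∧ ρ ≤ 1 ∧
    ∀ w : ℂ, Complex.abs w < ρ → Complex.abs w / 2 ≤ Complex.abs (Complex.sin w) := by
  have hd : DifferentiableAt ℂ Complex.sin 0 := Complex.differentiable_sin 0
  have hc : ContinuousAt (dslope Complex.sin 0) 0 := continuousAt_dslope_same.2 hd
  have h0 : dslope Complex.sin 0 0 = 1 := by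
    rw [dslope_same, Complex.deriv_sin, Complex.cos_zero]
  rw [Metric.continuousAt_iff] at hc
  obtain ⟨δ, hδ, hball⟩ := hc (1/2) (by norm_num)
  refine ⟨min δ 1, lt_min hδ one_pos, min_le_right _ _, fun w hw => ?_⟩
  have h1 : dist (dslope Complex.sin 0 w) (dslope Complex.sin 0 0) < 1/2 := by
    apply hball
    simp only [dist_zero_right, Complex.norm_eq_abs]
    exact lt_of_lt_of_le hw (min_le_left _ _)
  rw [h0, Complex.dist_eq, Complex.norm_eq_abs] at h1
  have h2 : (1:ℝ)/2 ≤ Complex.abs (dslope Complex.sin 0 w) := by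
    have h3 : ‖(1:ℂ)‖ - ‖(1:ℂ) - dslope Complex.sin 0 w‖ ≤ ‖dslope Complex.sin 0 w‖ := by
      have := norm_sub_norm_le (1:ℂ) ((1:ℂ) - dslope Complex.sin 0 w)
      simpa using this
    rw [norm_one, norm_sub_rev] at h3
    simp only [Complex.norm_eq_abs] at h3
    linarith
  have h5 : Complex.sin w = w * dslope Complex.sin 0 w := by
    have h6 := sub_smul_dslope Complex.sin 0 w
    simp only [sub_zero, Complex.sin_zero, smul_eq_mul] at h6
    rw [h6]
  rw [h5, map_mul]
  calc Complex.abs w / 2 = Complex.abs w * (1/2) := by ring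
  _ ≤ Complex.abs w * Complex.abs (dslope Complex.sin 0 w) :=
      mul_le_mul_of_nonneg_left h2 (Complex.abs.nonneg w)

lemma my_dslope_diff (F : ℂ → ℂ) (hF : Differentiable ℂ F) (z₀ : ℂ) :
    DifferentiableAt ℂ (dslope F z₀) z₀ := by
  obtain ⟨p, hp⟩ := hF.analyticAt z₀
  exact hp.has_fpower_series_dslope_fslope.analyticAt.differentiableAt

lemma my_sin_zeros (T : ℝ) (hT : 0 < T) (z : ℂ) :
    Complex.sin ((T:ℂ) * z) = 0 ↔ ∃ k : ℤ, z = (((k : ℝ) * Real.pi / T : ℝ) : ℂ) := by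
  have hTne : (T:ℂ) ≠ 0 := Complex.ofReal_ne_zero.2 hT.ne'
  rw [Complex.sin_eq_zero_iff]
  constructor
  · rintro ⟨k, hk⟩
    refine ⟨k, ?_⟩
    push_cast
    field_simp at hk ⊢
    linear_combination hk
  · rintro ⟨k, hk⟩
    refine ⟨k, ?_⟩
    rw [hk]
    push_cast
    field_simp

lemma my_dist_zeros (T : ℝ) (hT : 0 < T) (k m : ℤ) (h : k ≠ m) :
    Real.pi / T ≤ Complex.abs ((((k : ℝ) * Real.pi / T : ℝ) : ℂ) - (((m : ℝ) * Real.pi / T : ℝ) : ℂ)) := by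
  rw [← Complex.ofReal_sub, Complex.abs_ofReal]
  have h1 : (k:ℝ) * Real.pi / T - (m:ℝ) * Real.pi / T = ((k - m : ℤ) : ℝ) * (Real.pi / T) := by
    push_cast; field_simp
  rw [h1, abs_mul, abs_of_pos (div_pos Real.pi_pos hT)]
  have h2 : (1:ℝ) ≤ |((k - m : ℤ) : ℝ)| := by
    rw [← Int.cast_abs]
    exact_mod_cast Int.one_le_abs (sub_ne_zero.2 h)
  nlinarith [div_pos Real.pi_pos hT]

lemma my_sin_shift (T : ℝ) (hT : 0 < T) (z : ℂ) (k : ℤ) :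
    Complex.abs (Complex.sin ((T:ℂ) * z)) =
      Complex.abs (Complex.sin ((T:ℂ) * (z - (((k : ℝ) * Real.pi / T : ℝ) : ℂ)))) := by
  have hTne : (T:ℂ) ≠ 0 := Complex.ofReal_ne_zero.2 hT.ne'
  have h1 : (T:ℂ) * z = (T:ℂ) * (z - (((k : ℝ) * Real.pi / T : ℝ) : ℂ)) + (k:ℂ) * (Real.pi:ℂ) := by
    push_cast
    field_simp
    ring
  rw [h1, Complex.sin_add, Complex.sin_int_mul_pi, mul_zero, add_zero, map_mul]
  have h2 : ((k:ℂ) * (Real.pi:ℂ)) = (((k:ℝ) * Real.pi : ℝ) : ℂ) := by push_cast; ring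
  rw [h2, ← Complex.ofReal_cos, Complex.abs_ofReal, Real.abs_cos_int_mul_pi, mul_one]

open Classical in
noncomputable def myH (T : ℝ) (G : ℂ → ℂ) : ℂ → ℂ := fun z =>
  if Complex.sin ((T:ℂ) * z) = 0 then deriv G z / ((T:ℂ) * Complex.cos ((T:ℂ) * z))
  else G z / Complex.sin ((T:ℂ) * z)

lemma my_sinT_hasDeriv (T : ℝ) (z : ℂ) :
    HasDerivAt (fun z => Complex.sin ((T:ℂ) * z)) ((T:ℂ) * Complex.cos ((T:ℂ) * z)) z := by
  have h1 : HasDerivAt (fun z : ℂ => (T:ℂ) * z) ((T:ℂ)) z := by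
    simpa using (hasDerivAt_id z).const_mul (T:ℂ)
  have h2 := (Complex.hasDerivAt_sin ((T:ℂ) * z)).comp z h1
  simpa [Function.comp_def, mul_comm] using h2

lemma my_h_diff (T : ℝ) (hT : 0 < T) (G : ℂ → ℂ) (hG : Differentiable ℂ G)
    (hzero : ∀ k : ℤ, G (((k : ℝ) * Real.pi / T : ℝ) : ℂ) = 0) :
    Differentiable ℂ (myH T G) := by
  have hs : Differentiable ℂ (fun z => Complex.sin ((T:ℂ) * z)) :=
    fun z => (my_sinT_hasDeriv T z).differentiableAt
  intro z₀
  by_cases h0 : Complex.sin ((T:ℂ) * z₀) = 0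
  · -- at a zero of sin
    obtain ⟨k, hk⟩ := (my_sin_zeros T hT z₀).1 h0
    have hG0 : G z₀ = 0 := by rw [hk]; exact hzero k
    have hcos : Complex.cos ((T:ℂ) * z₀) ≠ 0 := by
      intro hc
      have := Complex.sin_sq_add_cos_sq ((T:ℂ) * z₀)
      rw [h0, hc] at this
      simp at this
    have hDval : dslope (fun z => Complex.sin ((T:ℂ) * z)) z₀ z₀ =
        (T:ℂ) * Complex.cos ((T:ℂ) * z₀) := by
      rw [dslope_same]
      exact (my_sinT_hasDeriv T z₀).deriv
    have hDne : dslope (fun z => Complex.sin ((T:ℂ) * z)) z₀ z₀ ≠ 0 := by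
      rw [hDval]
      exact mul_ne_zero (Complex.ofReal_ne_zero.2 hT.ne') hcos
    have hq : DifferentiableAt ℂ
        (fun z => dslope G z₀ z / dslope (fun z => Complex.sin ((T:ℂ) * z)) z₀ z) z₀ :=
      (my_dslope_diff G hG z₀).div (my_dslope_diff _ hs z₀) hDne
    have hεpos : 0 < Real.pi / T := div_pos Real.pi_pos hT
    have heq : myH T G =ᶠ[nhds z₀]
        (fun z => dslope G z₀ z / dslope (fun z => Complex.sin ((T:ℂ) * z)) z₀ z) := by
      filter_upwards [Metric.ball_mem_nhds z₀ hεpos] with z hz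
      rcases eq_or_ne z z₀ with rfl | hne
      · rw [myH, if_pos h0, dslope_same, hDval]
      · have hsne : Complex.sin ((T:ℂ) * z) ≠ 0 := by
          intro hzz
          obtain ⟨m, hm⟩ := (my_sin_zeros T hT z).1 hzz
          have hkm : k ≠ m := by
            intro hkm; rw [hkm] at hk; exact hne (hm.trans hk.symm)
          have := my_dist_zeros T hT k m hkm
          rw [← hk, ← hm] at this
          rw [Metric.mem_ball, Complex.dist_eq, Complex.norm_eq_abs] at hz
          rw [← Complex.abs.map_neg] at this
          simp only [neg_sub] at this
          linarith
        have hzne : z - z₀ ≠ 0 := sub_ne_zero.2 hne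
        rw [myH, if_neg hsne, dslope_of_ne _ hne, dslope_of_ne _ hne,
          slope_def_field, slope_def_field, hG0, h0, sub_zero, sub_zero]
        field_simp
      -- end
    exact hq.congr_of_eventuallyEq heq
  · -- sin ≠ 0 here
    have hev : ∀ᶠ z in nhds z₀, Complex.sin ((T:ℂ) * z) ≠ 0 := by
      have : ContinuousAt (fun z => Complex.sin ((T:ℂ) * z)) z₀ := (hs z₀).continuousAt
      exact this.eventually_ne h0
    have hq : DifferentiableAt ℂ (fun z => G z / Complex.sin ((T:ℂ) * z)) z₀ :=
      (hG z₀).div (hs z₀) h0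
    have heq : myH T G =ᶠ[nhds z₀] (fun z => G z / Complex.sin ((T:ℂ) * z)) := by
      filter_upwards [hev] with z hz
      rw [myH, if_neg hz]
    exact hq.congr_of_eventuallyEq heq

set_option maxHeartbeats 1000000 in
lemma my_h_bound (T : ℝ) (hT : 0 < T) (G : ℂ → ℂ) (hG : Differentiable ℂ G) (C : ℝ)
    (hCpos : 0 < C)
    (hC : ∀ z : ℂ, Complex.abs (G z) ≤ C * Real.exp (T * |z.im|))
    (hzero : ∀ k : ℤ, G (((k : ℝ) * Real.pi / T : ℝ) : ℂ) = 0) :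
    ∃ M : ℝ, ∀ z : ℂ, Complex.abs (myH T G z) ≤ M := by
  obtain ⟨ρ, hρ0, hρ1, hρ⟩ := my_sin_lower
  have hπ3 : (3:ℝ) < Real.pi := Real.pi_gt_three
  set δ := Real.sin (ρ/2) with hδdef
  have hδ : 0 < δ := Real.sin_pos_of_pos_of_lt_pi (half_pos hρ0) (by linarith)
  set R := 1 + Real.pi / T with hRdef
  have hπT : 0 < Real.pi / T := div_pos Real.pi_pos hT
  have hR : 0 < R := by positivity
  set M' := C * Real.exp (T * R) + 1 with hM'def
  have hM' : 0 < M' := by positivity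
  have hM'gt : C * Real.exp (T * R) < M' := by simp [hM'def]
  have hq1 : Real.exp (-(2*T)) < 1 := Real.exp_lt_one_iff.2 (by linarith)
  set M₁ := 2*C/(1 - Real.exp (-(2*T))) with hM₁def
  set M₂ := C * Real.exp T / δ with hM₂def
  set M₃ := 2*M'/(R*T) with hM₃def
  clear_value δ R M' M₁ M₂ M₃
  refine ⟨max M₁ (max M₂ M₃), fun z => ?_⟩
  have himTz : ((T:ℂ) * z).im = T * z.im := by simp
  by_cases him : 1 ≤ |z.im|
  · -- large imaginary part
    set u := T * |z.im| with hudef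
    have huT : T ≤ u := by nlinarith
    have hsinh : Real.sinh u ≤ Complex.abs (Complex.sin ((T:ℂ) * z)) := by
      have := my_sinh_le_norm_sin ((T:ℂ) * z)
      rwa [himTz, abs_mul, abs_of_pos hT] at this
    have hlow : Real.exp u * (1 - Real.exp (-(2*T))) / 2 ≤ Real.sinh u := by
      rw [Real.sinh_eq]
      have h1 : Real.exp (-u) ≤ Real.exp (-(2*T)) * Real.exp u := by
        rw [← Real.exp_add]
        exact Real.exp_le_exp.2 (by linarith)
      nlinarith
    have hlowpos : 0 < Real.exp u * (1 - Real.exp (-(2*T))) / 2 := by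
      nlinarith [Real.exp_pos u]
    have hne : Complex.sin ((T:ℂ) * z) ≠ 0 := by
      intro h
      rw [h, map_zero] at hsinh
      nlinarith
    have hGb : Complex.abs (G z) ≤ C * Real.exp u := hC z
    have : Complex.abs (myH T G z) ≤ (C * Real.exp u) / (Real.exp u * (1 - Real.exp (-(2*T))) / 2) := by
      rw [myH, if_neg hne, map_div₀]
      exact div_le_div₀ (by positivity) hGb hlowpos (le_trans hlow hsinh)
    have heq : (C * Real.exp u) / (Real.exp u * (1 - Real.exp (-(2*T))) / 2) = M₁ := by
      rw [hM₁def, div_eq_div_iff hlowpos.ne' (by linarith : (0:ℝ) < 1 - Real.exp (-(2*T))).ne']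
      ring
    rw [heq] at this
    exact le_trans this (le_max_left _ _)
  · -- strip
    push_neg at him
    obtain ⟨k, hkdef⟩ : ∃ k : ℤ, k = round (T * z.re / Real.pi) := ⟨_, rfl⟩
    obtain ⟨z₀, hz₀def⟩ : ∃ z₀ : ℂ, z₀ = (((k:ℝ) * Real.pi / T : ℝ) : ℂ) := ⟨_, rfl⟩
    obtain ⟨w, hwdef⟩ : ∃ w : ℂ, w = (T:ℂ) * (z - z₀) := ⟨_, rfl⟩
    have hGz₀ : G z₀ = 0 := by rw [hz₀def]; exact hzero k
    have hsz₀ : Complex.sin ((T:ℂ) * z₀) = 0 := (my_sin_zeros T hT z₀).2 ⟨k, hz₀def⟩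
    have hshift : Complex.abs (Complex.sin ((T:ℂ) * z)) = Complex.abs (Complex.sin w) := by
      rw [hwdef, hz₀def]; exact my_sin_shift T hT z k
    have hz₀im : z₀.im = 0 := by simp [hz₀def]
    have hwim : w.im = T * z.im := by simp [hwdef, hz₀def]
    have hwimabs : |w.im| = T * |z.im| := by
      rw [hwim, abs_mul, abs_of_pos hT]
    have hwre : |w.re| ≤ Real.pi / 2 := by
      have hre : w.re = Real.pi * (T * z.re / Real.pi - (k:ℝ)) := by
        have : w.re = T * (z.re - (k:ℝ) * Real.pi / T) := by
          simp [hwdef, hz₀def]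
        rw [this]
        field_simp
      have hround := abs_sub_round (T * z.re / Real.pi)
      rw [← hkdef] at hround
      rw [hre, abs_mul, abs_of_pos Real.pi_pos]
      calc Real.pi * |T * z.re / Real.pi - (k:ℝ)| ≤ Real.pi * (1/2) := by
            exact mul_le_mul_of_nonneg_left hround Real.pi_pos.le
        _ = Real.pi / 2 := by ring
    have habsGstrip : Complex.abs (G z) ≤ C * Real.exp T := by
      refine le_trans (hC z) ?_
      have : Real.exp (T * |z.im|) ≤ Real.exp T := by
        apply Real.exp_le_exp.2
        nlinarith
      nlinarith [Real.exp_pos (T * |z.im|)]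
    by_cases hcase : ρ ≤ Complex.abs w
    · -- away from the zero: sin bounded below by δ
      have hsinlow : δ ≤ Complex.abs (Complex.sin w) := by
        by_cases him2 : ρ/2 ≤ |w.im|
        · have h1 : Real.sinh (ρ/2) ≤ Real.sinh |w.im| := Real.sinh_le_sinh.2 him2
          have h2 : δ ≤ ρ/2 := by rw [hδdef]; exact Real.sin_le (by linarith)
          have h3 : ρ/2 ≤ Real.sinh (ρ/2) := Real.self_le_sinh_iff.2 (by linarith)
          have h4 := my_sinh_le_norm_sin w
          linarith
        · push_neg at him2
          have h1 : ρ/2 ≤ |w.re| := by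
            have := Complex.abs_le_abs_re_add_abs_im w
            linarith
          have h2 : δ ≤ Real.sin |w.re| := by
            rw [hδdef]
            apply Real.strictMonoOn_sin.monotoneOn ⟨by linarith, by linarith⟩
              ⟨by linarith [abs_nonneg w.re], hwre⟩ h1
          have h3 : Real.sin |w.re| = |Real.sin w.re| := by
            rcases le_or_gt 0 w.re with h | h
            · rw [_root_.abs_of_nonneg h,
                _root_.abs_of_nonneg (Real.sin_nonneg_of_nonneg_of_le_pi h (by linarith [le_abs_self w.re]))]
            · have hsn : Real.sin w.re ≤ 0 := by
                have h5 : 0 ≤ Real.sin (-w.re) :=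
                  Real.sin_nonneg_of_nonneg_of_le_pi (by linarith)
                    (by linarith [neg_le_abs w.re])
                rw [Real.sin_neg] at h5; linarith
              rw [_root_.abs_of_neg h, Real.sin_neg, _root_.abs_of_nonpos hsn]
          have h4 := my_abs_sin_re_le_norm_sin w
          rw [h3] at h2
          linarith
      have hne : Complex.sin ((T:ℂ) * z) ≠ 0 := by
        intro h
        have h0 := hshift
        rw [h, map_zero] at h0
        rw [← h0] at hsinlow
        linarith
      have : Complex.abs (myH T G z) ≤ (C * Real.exp T) / δ := by
        rw [myH, if_neg hne, map_div₀]
        refine div_le_div₀ (mul_nonneg hCpos.le (Real.exp_pos T).le) habsGstrip hδ ?_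
        rw [hshift]; exact hsinlow
      rw [← hM₂def] at this
      exact le_trans this (le_trans (le_max_left _ _) (le_max_right _ _))
    · -- near the zero: Schwarz
      push_neg at hcase
      have habsw : Complex.abs w = T * Complex.abs (z - z₀) := by
        rw [hwdef, map_mul, Complex.abs_ofReal, abs_of_pos hT]
      have habsz : Complex.abs (z - z₀) < ρ / T := by
        rw [habsw] at hcase
        rw [lt_div_iff₀ hT]
        linarith [hcase]
      have hmaps : Set.MapsTo G (Metric.ball z₀ R) (Metric.ball (G z₀) M') := by
        intro u hu
        rw [hGz₀, Metric.mem_ball, dist_eq_norm, sub_zero, Complex.norm_eq_abs]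
        have h1 : |u.im| ≤ Complex.abs (u - z₀) := by
          have h2 : (u - z₀).im = u.im := by simp [hz₀im]
          have := Complex.abs_im_le_abs (u - z₀)
          rwa [h2] at this
        rw [Metric.mem_ball, Complex.dist_eq] at hu
        have h3 : Complex.abs (G u) ≤ C * Real.exp (T * |u.im|) := hC u
        have h4 : Real.exp (T * |u.im|) ≤ Real.exp (T * R) := by
          apply Real.exp_le_exp.2
          have : |u.im| ≤ R := le_trans h1 (le_of_lt hu)
          nlinarith
        calc Complex.abs (G u) ≤ C * Real.exp (T * R) := by nlinarith [Real.exp_pos (T * |u.im|)]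
        _ < M' := hM'gt
      have hρTR : ρ / T < R := by
        rw [hRdef, div_lt_iff₀ hT]
        have hc : Real.pi / T * T = Real.pi := div_mul_cancel₀ _ hT.ne'
        nlinarith [hc]
      have hzball : z ∈ Metric.ball z₀ R := by
        rw [Metric.mem_ball, Complex.dist_eq, Complex.norm_eq_abs]
        linarith
      have hds : ‖dslope G z₀ z‖ ≤ M' / R :=
        Complex.norm_dslope_le_div_of_mapsTo_ball hG.differentiableOn (hmaps.mono_right Metric.ball_subset_closedBall) hzball
      have hTne : (T:ℂ) ≠ 0 := Complex.ofReal_ne_zero.2 hT.ne'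
      have hTz₀ : (T:ℂ) * z₀ = (((k:ℝ) * Real.pi : ℝ) : ℂ) := by
        rw [hz₀def]
        push_cast
        field_simp
      have hcosabs : Complex.abs (Complex.cos ((T:ℂ) * z₀)) = 1 := by
        rw [hTz₀, ← Complex.ofReal_cos, Complex.abs_ofReal]
        exact_mod_cast Real.abs_cos_int_mul_pi k
      by_cases hne : z = z₀
      · rw [hne, myH, if_pos hsz₀, map_div₀, map_mul, hcosabs, mul_one, Complex.abs_ofReal,
          _root_.abs_of_pos hT]
        have h1 : Complex.abs (deriv G z₀) = ‖dslope G z₀ z₀‖ := by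
          rw [dslope_same, Complex.norm_eq_abs]
        have h2 : ‖dslope G z₀ z₀‖ ≤ M' / R :=
          Complex.norm_dslope_le_div_of_mapsTo_ball hG.differentiableOn (hmaps.mono_right Metric.ball_subset_closedBall)
            (Metric.mem_ball_self hR)
        have h4 : Complex.abs (deriv G z₀) / T ≤ (M'/R)/T := by
          rw [h1]
          exact (div_le_div_iff_of_pos_right hT).2 h2
        have h5 : (M'/R)/T ≤ M₃ := by
          rw [hM₃def, div_div]
          exact (div_le_div_iff_of_pos_right (by positivity)).2 (by linarith)
        exact le_trans (le_trans h4 h5) (le_trans (le_max_right _ _) (le_max_right _ _))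
      · have hsne : Complex.sin ((T:ℂ) * z) ≠ 0 := by
          intro h
          obtain ⟨m, hm⟩ := (my_sin_zeros T hT z).1 h
          have hkm : k ≠ m := by
            intro hkm
            apply hne
            rw [hm, hz₀def, hkm]
          have hd := my_dist_zeros T hT k m hkm
          have : Complex.abs (z - z₀) = Complex.abs ((((k:ℝ) * Real.pi / T : ℝ):ℂ) - (((m:ℝ) * Real.pi / T : ℝ):ℂ)) := by
            rw [hm, hz₀def, ← Complex.abs.map_neg]
            congr 1
            ring
          rw [this] at habsz
          have : ρ / T < Real.pi / T := (div_lt_div_iff_of_pos_right hT).2 (by linarith)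
          linarith
        have hdpos : 0 < Complex.abs (z - z₀) := Complex.abs.pos (sub_ne_zero.2 hne)
        have habsG : Complex.abs (G z) = Complex.abs (z - z₀) * ‖dslope G z₀ z‖ := by
          have h5 := sub_smul_dslope G z₀ z
          rw [hGz₀, sub_zero, smul_eq_mul] at h5
          rw [← h5, map_mul, Complex.norm_eq_abs]
        have hsinlow2 : T * Complex.abs (z - z₀) / 2 ≤ Complex.abs (Complex.sin ((T:ℂ) * z)) := by
          rw [hshift]
          have := hρ w hcase
          rw [habsw] at this
          linarith
        have hnum : Complex.abs (G z) ≤ Complex.abs (z - z₀) * (M' / R) := by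
          rw [habsG]
          exact mul_le_mul_of_nonneg_left hds (Complex.abs.nonneg _)
        have : Complex.abs (myH T G z) ≤ (Complex.abs (z - z₀) * (M' / R)) / (T * Complex.abs (z - z₀) / 2) := by
          rw [myH, if_neg hsne, map_div₀]
          exact div_le_div₀ (by positivity) hnum (by positivity) hsinlow2
        have heq2 : (Complex.abs (z - z₀) * (M' / R)) / (T * Complex.abs (z - z₀) / 2) = M₃ := by
          rw [hM₃def]
          field_simp [hdpos.ne', hR.ne', hT.ne']
        rw [heq2] at this
        exact le_trans this (le_trans (le_max_right _ _) (le_max_right _ _))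

lemma my_key (T : ℝ) (hT : 0 < T) (G : ℂ → ℂ) (hG : Differentiable ℂ G) (C : ℝ)
    (hC : ∀ z : ℂ, Complex.abs (G z) ≤ C * Real.exp (T * |z.im|))
    (hzero : ∀ k : ℤ, G (((k : ℝ) * Real.pi / T : ℝ) : ℂ) = 0) :
    ∃ a : ℂ, ∀ z : ℂ, G z = a * Complex.sin ((T:ℂ) * z) := by
  have hC0 : 0 ≤ C := by
    have h0 := hC 0
    simp at h0
    linarith [Complex.abs.nonneg (G 0), h0]
  have hC1 : ∀ z : ℂ, Complex.abs (G z) ≤ (C + 1) * Real.exp (T * |z.im|) := fun z =>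
    le_trans (hC z) (by nlinarith [Real.exp_pos (T * |z.im|)])
  obtain ⟨M, hM⟩ := my_h_bound T hT G hG (C + 1) (by linarith) hC1 hzero
  have hdiff := my_h_diff T hT G hG hzero
  have hbdd : Bornology.IsBounded (Set.range (myH T G)) := by
    rw [isBounded_iff_forall_norm_le]
    refine ⟨M, ?_⟩
    rintro x ⟨z, rfl⟩
    rw [Complex.norm_eq_abs]
    exact hM z
  have hconst := hdiff.apply_eq_apply_of_bounded hbdd
  refine ⟨myH T G 0, fun z => ?_⟩
  by_cases h : Complex.sin ((T:ℂ) * z) = 0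
  · obtain ⟨k, hk⟩ := (my_sin_zeros T hT z).1 h
    rw [h, mul_zero, hk]
    exact hzero k
  · have hz := hconst z 0
    have h2 : G z / Complex.sin ((T:ℂ) * z) = myH T G 0 := by
      rw [← hz]
      simp only [myH]
      rw [if_neg h]
    rw [div_eq_iff h] at h2
    exact h2

lemma my_F_diff (f : ℝ × ℝ → ℂ) (hf : PolarAnalyticOn f polarHalfPlane) :
    Differentiable ℂ (fun z : ℂ => f (Real.exp z.re, z.im)) := by
  intro z₀
  set p : ℝ × ℝ := (Real.exp z₀.re, z₀.im) with hpdef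
  obtain ⟨L, hL⟩ := hf p (Real.exp_pos z₀.re)
  set Φ : ℂ → ℝ × ℝ := fun z => (Real.exp z.re, z.im) with hΦdef
  have hΦcont : Continuous Φ := by
    exact (Real.continuous_exp.comp Complex.continuous_re).prodMk Complex.continuous_im
  have hΦinj : ∀ z : ℂ, Φ z = Φ z₀ → z = z₀ := by
    intro z hz
    rw [hΦdef] at hz
    simp only [Prod.mk.injEq] at hz
    exact Complex.ext (Real.exp_injective hz.1) hz.2
  have hΦtend : Tendsto Φ (nhdsWithin z₀ {z₀}ᶜ) (nhdsWithin p (polarHalfPlane \ {p})) := by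
    rw [tendsto_nhdsWithin_iff]
    constructor
    · exact (hΦcont.continuousAt.tendsto).mono_left nhdsWithin_le_nhds
    · filter_upwards [eventually_mem_nhdsWithin] with z hz
      refine ⟨Real.exp_pos z.re, ?_⟩
      simp only [Set.mem_singleton_iff]
      intro hzp
      exact hz (hΦinj z hzp)
  have hwΦ : ∀ z : ℂ, ((Real.exp z.re : ℝ) : ℂ) * Complex.exp (Complex.I * (z.im : ℂ)) =
      Complex.exp z := by
    intro z
    rw [Complex.ofReal_exp, ← Complex.exp_add]
    congr 1
    rw [mul_comm]
    exact Complex.re_add_im z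
  set Q : ℝ × ℝ → ℂ := fun q => (f q - f p) /
      ((q.1 : ℂ) * Complex.exp (Complex.I * (q.2 : ℂ)) -
       (p.1 : ℂ) * Complex.exp (Complex.I * (p.2 : ℂ))) with hQdef
  have htendQ : Tendsto (fun z => Q (Φ z)) (nhdsWithin z₀ {z₀}ᶜ) (nhds L) := hL.comp hΦtend
  have htendS : Tendsto (slope Complex.exp z₀) (nhdsWithin z₀ {z₀}ᶜ) (nhds (Complex.exp z₀)) :=
    hasDerivAt_iff_tendsto_slope.1 (Complex.hasDerivAt_exp z₀)
  have hmul : Tendsto (fun z => Q (Φ z) * slope Complex.exp z₀ z)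
      (nhdsWithin z₀ {z₀}ᶜ) (nhds (L * Complex.exp z₀)) := htendQ.mul htendS
  have hev : ∀ᶠ z in nhdsWithin z₀ {z₀}ᶜ,
      Q (Φ z) * slope Complex.exp z₀ z = slope (fun z : ℂ => f (Real.exp z.re, z.im)) z₀ z := by
    filter_upwards [eventually_mem_nhdsWithin,
      mem_nhdsWithin_of_mem_nhds (Metric.ball_mem_nhds z₀ one_pos)] with z hzne hzball
    have hne : z ≠ z₀ := hzne
    have hexpne : Complex.exp z ≠ Complex.exp z₀ := by
      intro hh
      obtain ⟨n, hn⟩ := Complex.exp_eq_exp_iff_exists_int.1 hh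
      have hn0 : n = 0 := by
        by_contra hn0
        have h1 : (1:ℝ) ≤ |(n:ℝ)| := by
          rw [← Int.cast_abs]
          exact_mod_cast Int.one_le_abs hn0
        have h2 : Complex.abs (z - z₀) < 1 := by
          rw [← Complex.norm_eq_abs, ← Complex.dist_eq]
          exact hzball
        have h3 : z - z₀ = (n:ℂ) * (2 * Real.pi * Complex.I) := by
          rw [hn]; ring
        rw [h3] at h2
        have h4 : Complex.abs ((n:ℂ) * (2 * Real.pi * Complex.I)) = |(n:ℝ)| * (2 * Real.pi) := by
          rw [map_mul]
          have h5 : Complex.abs (2 * Real.pi * Complex.I) = 2 * Real.pi := by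
            simp [_root_.abs_of_pos Real.pi_pos]
          rw [h5]
          congr 1
          exact_mod_cast Complex.abs_intCast n
        rw [h4] at h2
        nlinarith [Real.pi_gt_three]
      rw [hn0] at hn
      simp at hn
      exact hne (by rw [hn])
    have hQz : Q (Φ z) = (f (Φ z) - f p) / (Complex.exp z - Complex.exp z₀) := by
      have h7 : Q (Φ z) = (f (Φ z) - f p) /
          (((Real.exp z.re : ℝ) : ℂ) * Complex.exp (Complex.I * (z.im : ℂ)) -
           ((Real.exp z₀.re : ℝ) : ℂ) * Complex.exp (Complex.I * (z₀.im : ℂ))) := rfl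
      rw [h7, hwΦ z, hwΦ z₀]
    rw [hQz, slope_def_field, slope_def_field]
    have h5 : Complex.exp z - Complex.exp z₀ ≠ 0 := sub_ne_zero.2 hexpne
    have h6 : z - z₀ ≠ 0 := sub_ne_zero.2 hne
    have h8 : f (Φ z) = f (Real.exp z.re, z.im) := rfl
    have h9 : f p = f (Real.exp z₀.re, z₀.im) := rfl
    rw [h8, h9]
    field_simp
  have hHasDeriv : HasDerivAt (fun z : ℂ => f (Real.exp z.re, z.im)) (L * Complex.exp z₀) z₀ := by
    rw [hasDerivAt_iff_tendsto_slope]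
    exact hmul.congr' hev
  exact hHasDeriv.differentiableAt

/-- identity theorem in `B^∞_{c,T}`: a function vanishing at the
sample points `e^{kπ/T}` is a multiple of `(re^{iθ})^{-c} sin(T(log r + iθ))`. -/
theorem statement15 (c T : ℝ) (hT : 0 < T)
    (f : ℝ × ℝ → ℂ) (hf : MemMellinBernstein ⊤ c T f)
    (hzero : ∀ k : ℤ, f (Real.exp ((k : ℝ) * Real.pi / T), 0) = 0) :
    ∃ a : ℂ, ∀ r θ : ℝ, 0 < r →
      f (r, θ) = a * ((r ^ (-c) : ℝ) : ℂ) * Complex.exp (-(Complex.I * (c : ℂ) * (θ : ℂ))) *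
        Complex.sin ((T : ℂ) * ((Real.log r : ℂ) + Complex.I * (θ : ℂ))) := by
  obtain ⟨hpa, hX, C, hCpos, hCb⟩ := hf
  have hF : Differentiable ℂ (fun z : ℂ => f (Real.exp z.re, z.im)) := my_F_diff f hpa
  set F : ℂ → ℂ := fun z : ℂ => f (Real.exp z.re, z.im) with hFdef
  set G : ℂ → ℂ := fun z : ℂ => Complex.exp ((c:ℂ) * z) * F z with hGdef
  have hGd : Differentiable ℂ G := ((differentiable_id.const_mul ((c:ℂ))).cexp).mul hF
  have hGC : ∀ z : ℂ, Complex.abs (G z) ≤ C * Real.exp (T * |z.im|) := by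
    intro z
    have h1 : Complex.abs (G z) = Real.exp (c * z.re) * ‖f (Real.exp z.re, z.im)‖ := by
      rw [hGdef]
      simp only [map_mul, Complex.abs_exp, Complex.norm_eq_abs]
      congr 2 <;> simp [Complex.mul_re]
    have h2 := hCb (Real.exp z.re) z.im (Real.exp_pos z.re)
    have h3 : Real.exp z.re ^ c = Real.exp (c * z.re) := by
      rw [Real.rpow_def_of_pos (Real.exp_pos z.re), Real.log_exp, mul_comm]
    rw [h1, ← h3]
    exact h2
  have hGzero : ∀ k : ℤ, G (((k : ℝ) * Real.pi / T : ℝ) : ℂ) = 0 := by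
    intro k
    rw [hGdef]
    simp only [hFdef, Complex.ofReal_re, Complex.ofReal_im]
    rw [hzero k, mul_zero]
  obtain ⟨a, ha⟩ := my_key T hT G hGd C hGC hGzero
  refine ⟨a, fun r θ hr => ?_⟩
  set z : ℂ := (Real.log r : ℂ) + Complex.I * (θ : ℂ) with hzdef
  have hzre : z.re = Real.log r := by simp [hzdef]
  have hzim : z.im = θ := by simp [hzdef]
  have hFz : F z = f (r, θ) := by
    rw [hFdef]
    simp only []
    rw [hzre, hzim, Real.exp_log hr]
  have hGz := ha z
  have hEne : Complex.exp ((c:ℂ) * z) ≠ 0 := Complex.exp_ne_zero _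
  have hFz2 : F z = a * Complex.sin ((T:ℂ) * z) / Complex.exp ((c:ℂ) * z) := by
    rw [eq_div_iff hEne]
    rw [hGdef] at hGz
    simp only [] at hGz
    linear_combination hGz
  have hsplit : Complex.exp ((c:ℂ) * z) *
      (((r ^ (-c) : ℝ) : ℂ) * Complex.exp (-(Complex.I * (c:ℂ) * (θ:ℂ)))) = 1 := by
    rw [Real.rpow_def_of_pos hr, Complex.ofReal_exp, ← Complex.exp_add, ← Complex.exp_add]
    rw [show ((c:ℂ) * z + (((Real.log r * -c : ℝ) : ℂ) + -(Complex.I * (c:ℂ) * (θ:ℂ)))) = 0 by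
      rw [hzdef]; push_cast; ring]
    exact Complex.exp_zero
  have hX : (Complex.exp ((c:ℂ) * z))⁻¹ =
      ((r ^ (-c) : ℝ) : ℂ) * Complex.exp (-(Complex.I * (c:ℂ) * (θ:ℂ))) :=
    inv_eq_of_mul_eq_one_right hsplit
  rw [← hFz, hFz2, div_eq_mul_inv, hX]
  ring


end
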